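/- arXiv:0809.4695 — 4 statements merged into one kernel-verified Lean document; each statement's English description precedes it below -/
import Mathlib

section
/- Let p be an odd prime and let P and Q be finite Camina p-groups of nilpotence class 2. Then |℧₁(P)| = |℧₁(Q)| if and only if |P : Ω₁(P)| = |Q : Ω₁(Q)|. -/
/-- A group is a Camina group if the conjugacy class of every element outside the
commutator subgroup equals its left coset of the commutator subgroup. -/
def IsCamina (G : Type*) [Group G] : Prop :=
  ∀ g : G, g ∉ commutator G →
    {x : G | IsConj g x} = {x : G | ∃ c ∈ commutator G, x = g * c}

/-- A group has nilpotence class exactly 2: it is nonabelian and its commutator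
subgroup is central. -/
def IsClassTwo (G : Type*) [Group G] : Prop :=
  (∃ a b : G, a * b ≠ b * a) ∧ commutator G ≤ Subgroup.center G

/-- `℧₁(G)`: the subgroup generated by the `p`-th powers. -/
def agemo (p : ℕ) (G : Type*) [Group G] : Subgroup G :=
  Subgroup.closure {x : G | ∃ g : G, g ^ p = x}

/-- `Ω₁(G)`: the subgroup generated by the elements of order dividing `p`. -/
def omega1 (p : ℕ) (G : Type*) [Group G] : Subgroup G :=
  Subgroup.closure {x : G | x ^ p = 1}

/-- The set of irreducible complex characters of `G`. -/
def IrrChar (G : Type) [Group G] : Set (G → ℂ) :=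
  {χ | ∃ V : FDRep ℂ G, CategoryTheory.Simple V ∧ χ = FDRep.character V}

/-- Two groups form a Brauer pair: they are nonisomorphic, and there are bijections
between conjugacy classes and between irreducible characters compatible with character
values and with all power maps. -/
def IsBrauerPair (G H : Type) [Group G] [Group H] : Prop :=
  ¬ Nonempty (G ≃* H) ∧
  ∃ (f : ConjClasses G ≃ ConjClasses H) (e : IrrChar G ≃ IrrChar H),
    (∀ χ : IrrChar G, ∀ g : G, ∀ h : H,
      f (ConjClasses.mk g) = ConjClasses.mk h → χ.1 g = (e χ).1 h) ∧
    (∀ (n : ℤ) (g : G) (h : H),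
      f (ConjClasses.mk g) = ConjClasses.mk h →
        f (ConjClasses.mk (g ^ n)) = ConjClasses.mk (h ^ n))

open scoped commutatorElement

section Aux
variable {G : Type*} [Group G]

lemma pow_mul_of_central (a b : G) (h : ∀ x : G, ⁅a, b⁆ * x = x * ⁅a, b⁆) (n : ℕ) :
    a ^ n * b = ⁅a, b⁆ ^ n * b * a ^ n := by
  induction n with
  | zero => simp
  | succ n ih =>
    have hc : ∀ x : G, Commute ⁅a, b⁆ x := fun x => (h x)
    have hab : a * b = ⁅a, b⁆ * b * a := by group
    calc a ^ (n + 1) * b = a * (a ^ n * b) := by rw [pow_succ']; group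
      _ = a * (⁅a, b⁆ ^ n * b * a ^ n) := by rw [ih]
      _ = (a * ⁅a, b⁆ ^ n) * b * a ^ n := by group
      _ = (⁅a, b⁆ ^ n * a) * b * a ^ n := by rw [((hc a).pow_left n).symm.eq]
      _ = ⁅a, b⁆ ^ n * (a * b) * a ^ n := by group
      _ = ⁅a, b⁆ ^ n * (⁅a, b⁆ * b * a) * a ^ n := by rw [hab]
      _ = ⁅a, b⁆ ^ (n + 1) * b * a ^ (n + 1) := by rw [pow_succ, pow_succ]; group

lemma commutator_pow_left_central (a b : G) (h : ∀ x : G, ⁅a, b⁆ * x = x * ⁅a, b⁆) (n : ℕ) :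
    ⁅a ^ n, b⁆ = ⁅a, b⁆ ^ n := by
  have := pow_mul_of_central a b h n
  rw [commutatorElement_def]
  rw [this]
  group

lemma mul_pow_central (a b : G) (h : ∀ x : G, ⁅b, a⁆ * x = x * ⁅b, a⁆) (n : ℕ) :
    (a * b) ^ n = ⁅b, a⁆ ^ (n * (n - 1) / 2) * a ^ n * b ^ n := by
  induction n with
  | zero => simp
  | succ n ih =>
    have hc : ∀ x : G, Commute ⁅b, a⁆ x := fun x => (h x)
    have hba : ∀ m : ℕ, b ^ m * a = ⁅b, a⁆ ^ m * a * b ^ m := pow_mul_of_central b a h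
    have hT : (n + 1) * ((n + 1) - 1) / 2 = n * (n - 1) / 2 + n := by
      have h2 : ∀ k : ℕ, k * (k - 1) / 2 = k.choose 2 := fun k => (Nat.choose_two_right k).symm
      rw [h2, h2, Nat.choose_succ_succ, Nat.choose_one_right, add_comm]
    calc (a * b) ^ (n + 1) = (a * b) ^ n * (a * b) := by rw [pow_succ]
      _ = ⁅b, a⁆ ^ (n * (n - 1) / 2) * a ^ n * b ^ n * (a * b) := by rw [ih]
      _ = ⁅b, a⁆ ^ (n * (n - 1) / 2) * a ^ n * (b ^ n * a) * b := by group
      _ = ⁅b, a⁆ ^ (n * (n - 1) / 2) * a ^ n * (⁅b, a⁆ ^ n * a * b ^ n) * b := by rw [hba n]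
      _ = ⁅b, a⁆ ^ (n * (n - 1) / 2) * (a ^ n * ⁅b, a⁆ ^ n) * a * b ^ (n + 1) := by
          rw [pow_succ]; group
      _ = ⁅b, a⁆ ^ (n * (n - 1) / 2) * (⁅b, a⁆ ^ n * a ^ n) * a * b ^ (n + 1) := by
          rw [((hc (a ^ n)).pow_left n).eq]
      _ = ⁅b, a⁆ ^ (n * (n - 1) / 2 + n) * a ^ (n + 1) * b ^ (n + 1) := by
          rw [pow_add, pow_succ]; group
      _ = ⁅b, a⁆ ^ ((n + 1) * ((n + 1) - 1) / 2) * a ^ (n + 1) * b ^ (n + 1) := by rw [hT]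

end Aux

lemma key_card_index {p : ℕ} (hp : p.Prime) (hodd : Odd p) (G : Type*) [Group G] [Finite G]
    (hGp : IsPGroup p G) (hcam : IsCamina G) (h2 : IsClassTwo G) :
    Nat.card (agemo p G) = (omega1 p G).index := by
  obtain ⟨⟨a0, b0, hab0⟩, hcent⟩ := h2
  have hcentral : ∀ x ∈ commutator G, ∀ y : G, x * y = y * x :=
    fun x hx y => (Subgroup.mem_center_iff.mp (hcent hx) y).symm
  have hcommmem : ∀ a b : G, ⁅a, b⁆ ∈ commutator G := fun a b =>
    Subgroup.commutator_mem_commutator (Subgroup.mem_top a) (Subgroup.mem_top b)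
  -- Step A : every p-th power lies in the commutator subgroup
  have stepA : ∀ g : G, g ^ p ∈ commutator G := by
    intro g
    by_contra hg
    have hcam' := hcam _ hg
    have surj : ∀ c ∈ commutator G, ∃ d ∈ commutator G, d ^ p = c := by
      intro c hcmem
      have hmem : (g ^ p) * c ∈ {x : G | ∃ c ∈ commutator G, x = g ^ p * c} := ⟨c, hcmem, rfl⟩
      rw [← hcam'] at hmem
      obtain ⟨y, hy⟩ := isConj_iff.mp hmem
      refine ⟨⁅g⁻¹, y⁆, hcommmem _ _, ?_⟩
      rw [← commutator_pow_left_central g⁻¹ y (fun x => hcentral _ (hcommmem g⁻¹ y) x) p]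
      have : (g⁻¹) ^ p = (g ^ p)⁻¹ := by group
      rw [this, commutatorElement_def, inv_inv]
      calc (g ^ p)⁻¹ * y * g ^ p * y⁻¹ = (g ^ p)⁻¹ * (y * g ^ p * y⁻¹) := by group
        _ = c := by rw [hy]; group
    have surjn : ∀ n : ℕ, ∀ c ∈ commutator G, ∃ d ∈ commutator G, d ^ (p ^ n) = c := by
      intro n
      induction n with
      | zero => exact fun c hc => ⟨c, hc, by simp⟩
      | succ n ih =>
        intro c hc
        obtain ⟨e, he, hep⟩ := surj c hc
        obtain ⟨d, hd, hdp⟩ := ih e he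
        exact ⟨d, hd, by rw [pow_succ, pow_mul, hdp, hep]⟩
    haveI := Fact.mk hp
    obtain ⟨n, hn⟩ := hGp.exists_card_eq
    have hz : ⁅a0, b0⁆ ≠ 1 := fun h => hab0 (commutatorElement_eq_one_iff_commute.mp h).eq
    obtain ⟨d, _, hd⟩ := surjn n ⁅a0, b0⁆ (hcommmem a0 b0)
    rw [← hn, pow_card_eq_one'] at hd
    exact hz hd.symm
  -- Step B : the commutator subgroup has exponent p
  have stepB : ∀ x ∈ commutator G, x ^ p = 1 := by
    intro x hx
    rw [commutator_eq_closure] at hx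
    refine (Subgroup.closure_induction
      (p := fun x _ => x ∈ Subgroup.center G ∧ x ^ p = 1) ?_ ?_ ?_ ?_ hx).2
    · rintro z ⟨a, b, rfl⟩
      refine ⟨hcent (hcommmem a b), ?_⟩
      rw [← commutator_pow_left_central a b (fun x => hcentral _ (hcommmem a b) x) p]
      exact commutatorElement_eq_one_iff_commute.mpr (hcentral _ (stepA a) b)
    · exact ⟨Subgroup.one_mem _, one_pow p⟩
    · rintro z w _ _ ⟨hz1, hz2⟩ ⟨hw1, hw2⟩
      refine ⟨Subgroup.mul_mem _ hz1 hw1, ?_⟩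
      have : Commute z w := (Subgroup.mem_center_iff.mp hz1 w).symm
      rw [this.mul_pow, hz2, hw2, one_mul]
    · rintro z _ ⟨hz1, hz2⟩
      exact ⟨Subgroup.inv_mem _ hz1, by rw [inv_pow, hz2, inv_one]⟩
  -- Step C : the p-th power map is a homomorphism
  have hmul : ∀ a b : G, (a * b) ^ p = a ^ p * b ^ p := by
    intro a b
    rw [mul_pow_central a b (fun x => hcentral _ (hcommmem b a) x) p]
    obtain ⟨k, hk⟩ := hodd
    have h1 : p - 1 = 2 * k := by omega
    have hdiv : p * (p - 1) / 2 = p * k := by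
      rw [h1, show p * (2 * k) = p * k * 2 by ring, Nat.mul_div_cancel _ (by norm_num)]
    rw [hdiv, pow_mul, stepB _ (hcommmem b a), one_pow, one_mul]
  let φ : G →* G := { toFun := fun x => x ^ p, map_one' := one_pow p, map_mul' := hmul }
  have hrange : agemo p G = φ.range := by
    have : {x : G | ∃ g : G, g ^ p = x} = (φ.range : Set G) := by
      ext x
      simp only [Set.mem_setOf_eq, SetLike.mem_coe, MonoidHom.mem_range]
      rfl
    rw [agemo, this, Subgroup.closure_eq]
  have hker : omega1 p G = φ.ker := by
    have : {x : G | x ^ p = 1} = (φ.ker : Set G) := by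
      ext x
      simp only [Set.mem_setOf_eq, SetLike.mem_coe, MonoidHom.mem_ker]
      rfl
    rw [omega1, this, Subgroup.closure_eq]
  rw [hrange, hker, Subgroup.index_ker]


/-- For Camina `p`-groups `P`, `Q` of nilpotence class 2 with `p` odd,
`|℧₁(P)| = |℧₁(Q)|` iff `|P : Ω₁(P)| = |Q : Ω₁(Q)|`. -/
theorem card_agemo_eq_iff_index_omega_eq {p : ℕ} (hp : p.Prime) (hodd : Odd p)
    (P Q : Type*) [Group P] [Group Q] [Finite P] [Finite Q]
    (hPp : IsPGroup p P) (hQp : IsPGroup p Q)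
    (hPcam : IsCamina P) (hQcam : IsCamina Q)
    (hP2 : IsClassTwo P) (hQ2 : IsClassTwo Q) :
    Nat.card (agemo p P) = Nat.card (agemo p Q) ↔
      (omega1 p P).index = (omega1 p Q).index := by
  rw [key_card_index hp hodd P hPp hPcam hP2, key_card_index hp hodd Q hQp hQcam hQ2]
end

section
/- Let p be a prime and let P be a finite Camina p-group of nilpotence class 2. Then Z(P) = P', and both P' and P/P' are elementary abelian p-groups. -/
open scoped commutatorElement

/-- For a finite Camina `p`-group `P` of nilpotence class 2, `Z(P) = P'`, and both
`P'` and `P/P'` are elementary abelian `p`-groups. -/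
theorem center_eq_commutator_and_elem_abelian {p : ℕ} (hp : p.Prime)
    (P : Type*) [Group P] [Finite P] (hPp : IsPGroup p P)
    (hPcam : IsCamina P) (hP2 : IsClassTwo P) :
    Subgroup.center P = commutator P ∧
    (∀ x y : P, x ∈ commutator P → y ∈ commutator P → x * y = y * x) ∧
    (∀ x ∈ commutator P, x ^ p = 1) ∧
    (∀ a b : P ⧸ commutator P, a * b = b * a) ∧
    (∀ a : P ⧸ commutator P, a ^ p = 1) := by
  classical
  haveI : Fact p.Prime := ⟨hp⟩
  obtain ⟨⟨a, b, hab⟩, hle⟩ := hP2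
  -- every commutator element lies in the commutator subgroup
  have hmemK : ∀ x y : P, ⁅x, y⁆ ∈ commutator P := fun x y => by
    rw [commutator_def]
    exact Subgroup.commutator_mem_commutator (Subgroup.mem_top x) (Subgroup.mem_top y)
  have habne : (⁅a, b⁆ : P) ≠ 1 := fun h =>
    hab (commutatorElement_eq_one_iff_mul_comm.mp h)
  -- the commutator subgroup is proper
  have hKtop : ∃ g : P, g ∉ commutator P := by
    by_contra h
    push_neg at h
    exact hab ((Subgroup.mem_center_iff.mp (hle (h a)) b).symm)
  -- Camina surjectivity: for g outside P', every coset element is a conjugate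
  have hsurj : ∀ g : P, g ∉ commutator P → ∀ c ∈ commutator P,
      ∃ x : P, x * g * x⁻¹ = g * c := by
    intro g hg c hc
    have hset := hPcam g hg
    have : (g * c) ∈ {x : P | IsConj g x} := by
      rw [hset]; exact ⟨c, hc, rfl⟩
    exact isConj_iff.mp this
  -- an element of order p in the commutator subgroup
  obtain ⟨k, hk⟩ := (IsPGroup.iff_orderOf.mp hPp) ⁅a, b⁆
  have hkpos : k ≠ 0 := by
    intro h
    rw [h, pow_zero, orderOf_eq_one_iff] at hk
    exact habne hk
  set d : P := ⁅a, b⁆ ^ p ^ (k - 1) with hd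
  have hdK : d ∈ commutator P := (commutator P).pow_mem (hmemK a b) _
  have hdp : d ^ p = 1 := by
    rw [hd, ← pow_mul, ← pow_succ, Nat.sub_add_cancel
      (Nat.one_le_iff_ne_zero.mpr hkpos), ← hk, pow_orderOf_eq_one]
  have hdne : d ≠ 1 := by
    rw [hd]
    intro h
    have := orderOf_dvd_of_pow_eq_one h
    rw [hk] at this
    have hlt : p ^ (k - 1) < p ^ k :=
      Nat.pow_lt_pow_right hp.one_lt (Nat.sub_lt (Nat.pos_of_ne_zero hkpos) one_pos)
    exact absurd (Nat.le_of_dvd (pow_pos hp.pos _) this) (not_le.mpr hlt)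
  -- key: every p-th power lies in the commutator subgroup
  have hpow : ∀ g : P, g ^ p ∈ commutator P := by
    intro g
    by_cases hg : g ∈ commutator P
    · exact (commutator P).pow_mem hg p
    by_contra hgp
    -- the p-power map on P' would be surjective
    have hsur : ∀ c ∈ commutator P, ∃ e ∈ commutator P, e ^ p = c := by
      intro c hc
      obtain ⟨x, hx⟩ := hsurj (g ^ p) hgp c hc
      set e : P := g⁻¹ * (x * g * x⁻¹) with he
      have heK : e ∈ commutator P := by
        have : e = ⁅g⁻¹, x⁆ := by rw [he]; group
        rw [this]; exact hmemK _ _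
      refine ⟨e, heK, ?_⟩
      have h1 : x * g * x⁻¹ = g * e := by rw [he]; group
      have h2 : x * g ^ p * x⁻¹ = (x * g * x⁻¹) ^ p := conj_pow.symm
      have hce : Commute g e := Subgroup.mem_center_iff.mp (hle heK) g
      rw [h1, hce.mul_pow] at h2
      rw [hx] at h2
      exact (mul_left_cancel h2).symm
    -- contradiction: surjective p-power map on a finite group with an order-p element
    let F : commutator P → commutator P :=
      fun e => ⟨(e : P) ^ p, (commutator P).pow_mem e.2 p⟩
    have hFsurj : Function.Surjective F := by
      rintro ⟨c, hc⟩
      obtain ⟨e, heK, hep⟩ := hsur c hc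
      exact ⟨⟨e, heK⟩, Subtype.ext hep⟩
    have hFinj : Function.Injective F :=
      (Finite.injective_iff_surjective).mpr hFsurj
    have : (⟨d, hdK⟩ : commutator P) = ⟨1, (commutator P).one_mem⟩ := by
      apply hFinj
      simp only [F, Subtype.mk.injEq, hdp, one_pow]
    exact hdne (by simpa using congrArg Subtype.val this)
  -- exponent p of the commutator subgroup
  have hexpK : ∀ c ∈ commutator P, c ^ p = 1 := by
    intro c hc
    obtain ⟨g, hg⟩ := hKtop
    obtain ⟨x, hx⟩ := hsurj g hg c hc
    have hcc : Commute g c := Subgroup.mem_center_iff.mp (hle hc) g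
    have h2 : x * g ^ p * x⁻¹ = g ^ p * c ^ p := by
      rw [← conj_pow, hx, hcc.mul_pow]
    have h3 : x * g ^ p * x⁻¹ = g ^ p := by
      rw [Subgroup.mem_center_iff.mp (hle (hpow g)) x, mul_inv_cancel_right]
    rw [h3] at h2
    exact mul_left_cancel (a := g ^ p) (h2.symm.trans (mul_one _).symm)
  refine ⟨?_, ?_, hexpK, ?_, ?_⟩
  · -- center = commutator
    apply le_antisymm _ hle
    intro z hz
    by_contra hzK
    have hset := hPcam z hzK
    have : (z * ⁅a, b⁆) ∈ {x : P | IsConj z x} := by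
      rw [hset]; exact ⟨⁅a, b⁆, hmemK a b, rfl⟩
    obtain ⟨u, hu⟩ := isConj_iff.mp this
    have hz' : u * z * u⁻¹ = z := by
      rw [Subgroup.mem_center_iff.mp hz u, mul_inv_cancel_right]
    rw [hz'] at hu
    exact habne (mul_left_cancel (a := z) (hu.symm.trans (mul_one _).symm))
  · -- commutator subgroup is abelian
    intro x y hx _
    exact (Subgroup.mem_center_iff.mp (hle hx) y).symm
  · -- quotient is abelian
    intro A B
    induction A using QuotientGroup.induction_on with
    | H x =>
      induction B using QuotientGroup.induction_on with
      | H y =>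
        rw [← QuotientGroup.mk_mul, ← QuotientGroup.mk_mul, QuotientGroup.eq]
        have : (x * y)⁻¹ * (y * x) = ⁅y⁻¹, x⁻¹⁆ := by group
        rw [this]
        exact hmemK _ _
  · -- quotient has exponent p
    intro A
    induction A using QuotientGroup.induction_on with
    | H x =>
      rw [← QuotientGroup.mk_pow, QuotientGroup.eq_one_iff]
      exact hpow x
end

section
/- Let G be a finite Camina group of nilpotence class 2. Then G is a VZ-group: every irreducible complex character of G of degree greater than 1 vanishes on G \ Z(G). -/
open CategoryTheory
open scoped commutatorElement

section Aux
set_option linter.unusedSectionVars false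

variable {G : Type} [Group G]

/-- A linear map commuting with the action gives a categorical endomorphism. -/
def homOfComm (V : FDRep ℂ G) (f : V →ₗ[ℂ] V)
    (hf : ∀ h : G, f ∘ₗ V.ρ h = V.ρ h ∘ₗ f) : V ⟶ V :=
  ⟨⟨ModuleCat.ofHom f⟩, fun h => by ext x; exact LinearMap.congr_fun (hf h) x⟩

lemma central_scalar (V : FDRep ℂ G) [Simple V] {z : G} (hz : z ∈ Subgroup.center G) :
    ∃ c : ℂ, V.ρ z = c • (LinearMap.id : V →ₗ[ℂ] V) := by
  have comm : ∀ h : G, (V.ρ z) ∘ₗ (V.ρ h) = (V.ρ h) ∘ₗ (V.ρ z) := by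
    intro h
    have : V.ρ z * V.ρ h = V.ρ h * V.ρ z := by
      rw [← map_mul, ← map_mul, (Subgroup.mem_center_iff.mp hz h)]
    exact this
  obtain ⟨c, hc⟩ := endomorphism_simple_eq_smul_id (X := V) ℂ (homOfComm V (V.ρ z) comm)
  refine ⟨c, ?_⟩
  have := congrArg (fun φ : V ⟶ V => φ.hom.hom.hom) hc
  exact this.symm

end Aux

section Aux2
set_option linter.unusedSectionVars false
variable {G : Type} [Group G] [Finite G]

lemma char_mul_central (V : FDRep ℂ G) (g : G) {z : G} {c : ℂ}
    (hc : V.ρ z = c • (LinearMap.id : V →ₗ[ℂ] V)) :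
    V.character (g * z) = c * V.character g := by
  simp only [FDRep.character, map_mul, hc]
  rw [mul_smul_comm, map_smul, smul_eq_mul, Module.End.mul_eq_comp, LinearMap.comp_id]

end Aux2

/-- A finite Camina group of nilpotence class 2 is a VZ-group: every irreducible
complex character of degree greater than 1 vanishes off the center. -/
theorem camina_classTwo_isVZ (G : Type) [Group G] [Finite G]
    (hcam : IsCamina G) (h2 : IsClassTwo G) :
    ∀ V : FDRep ℂ G, CategoryTheory.Simple V → 1 < Module.finrank ℂ V →
      ∀ g : G, g ∉ Subgroup.center G → V.character g = 0 := by
  intro V hV hrank g hg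
  haveI := hV
  have hg' : g ∉ commutator G := fun h => hg (h2.2 h)
  by_contra hne
  -- every element of the commutator subgroup acts trivially
  have hall : ∀ z ∈ commutator G, V.ρ z = (LinearMap.id : V →ₗ[ℂ] V) := by
    intro z hz
    obtain ⟨c, hc⟩ := central_scalar V (h2.2 hz)
    have hconj : IsConj g (g * z) := by
      have hset := hcam g hg'
      have : (g * z) ∈ {x : G | IsConj g x} := by
        rw [hset]; exact ⟨z, hz, rfl⟩
      exact this
    obtain ⟨u, hu⟩ := hconj
    have hgz : (u : G) * g * (u : G)⁻¹ = g * z := mul_inv_eq_iff_eq_mul.mpr hu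
    have hchar : V.character (g * z) = V.character g := by
      rw [← hgz]; exact FDRep.char_conj V g (u : G)
    rw [char_mul_central V g hc] at hchar
    have hc1 : c = 1 := by
      by_contra hcne
      exact hne (by
        have := sub_eq_zero.mpr hchar
        rw [← sub_one_mul] at this
        rcases mul_eq_zero.mp this with h | h
        · exact absurd (sub_eq_zero.mp h) hcne
        · exact h)
    rw [hc, hc1, one_smul]
  -- hence the ρ-images pairwise commute
  have hcomm : ∀ a b : G, V.ρ a * V.ρ b = V.ρ b * V.ρ a := by
    intro a b
    have h1 : V.ρ ⁅a, b⁆ = (LinearMap.id : V →ₗ[ℂ] V) :=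
      hall _ (Subgroup.commutator_mem_commutator (Subgroup.mem_top a) (Subgroup.mem_top b))
    have h2' : (⁅a, b⁆ : G) * (b * a) = a * b := by group
    calc V.ρ a * V.ρ b = V.ρ (a * b) := (map_mul _ _ _).symm
      _ = V.ρ (⁅a, b⁆ * (b * a)) := by rw [h2']
      _ = V.ρ ⁅a, b⁆ * V.ρ (b * a) := map_mul _ _ _
      _ = V.ρ b * V.ρ a := by rw [h1, map_mul]; exact one_mul _
  -- so every ρ a is a scalar, hence every linear endomorphism is equivariant
  have hscalar : ∀ a : G, ∃ c : ℂ, V.ρ a = c • (LinearMap.id : V →ₗ[ℂ] V) := by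
    intro a
    obtain ⟨c, hc⟩ := endomorphism_simple_eq_smul_id (X := V) ℂ
      (homOfComm V (V.ρ a) (fun h => hcomm a h))
    exact ⟨c, (congrArg (fun φ : V ⟶ V => φ.hom.hom.hom) hc).symm⟩
  have hequiv : ∀ (f : V →ₗ[ℂ] V) (h : G), f ∘ₗ V.ρ h = V.ρ h ∘ₗ f := by
    intro f h
    obtain ⟨c, hc⟩ := hscalar h
    rw [hc]; ext v; simp
  -- linear embedding of all endomorphisms into the 1-dimensional Hom space
  let L : (V →ₗ[ℂ] V) →ₗ[ℂ] (V ⟶ V) :=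
    { toFun := fun f => homOfComm V f (hequiv f)
      map_add' := fun f g => by apply Action.Hom.ext; ext x; rfl
      map_smul' := fun c f => by apply Action.Hom.ext; ext x; rfl }
  have hinj : Function.Injective L := fun f g h => congrArg (fun φ : V ⟶ V => φ.hom.hom.hom) h
  have hle : Module.finrank ℂ (V →ₗ[ℂ] V) ≤ Module.finrank ℂ (V ⟶ V) :=
    LinearMap.finrank_le_finrank_of_injective hinj
  rw [CategoryTheory.finrank_endomorphism_simple_eq_one ℂ V, Module.finrank_linearMap] at hle
  nlinarith [hrank]
end

section
/- Let p be an odd prime and let P be a finite Camina p-group of nilpotence class 2. Then the p-th power map induces a group isomorphism from P/Ω₁(P) onto ℧₁(P); moreover, P' ≤ Ω₁(P) and ℧₁(P) ≤ P', and ℧₁(P) is elementary abelian. -/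
open scoped commutatorElement

section Aux
variable {G : Type*} [Group G]

lemma aux_comm_central (h2 : commutator G ≤ Subgroup.center G) (a b x : G) :
    Commute ⁅a, b⁆ x :=
  ((Subgroup.mem_center_iff.mp
    (h2 (Subgroup.commutator_mem_commutator (Subgroup.mem_top a) (Subgroup.mem_top b)))) x).symm

lemma aux_yx (hc : ∀ a b x : G, Commute ⁅a, b⁆ x) (x y : G) :
    y * x = x * y * ⁅y, x⁆ := by
  have h := (hc y x (x * y)).eq
  calc y * x = ⁅y, x⁆ * (x * y) := by
        simp only [commutatorElement_def, mul_assoc, inv_mul_cancel_left, inv_mul_cancel, mul_one]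
  _ = x * y * ⁅y, x⁆ := h

lemma aux_pow_mul {x y c : G} (hcomm : ∀ z : G, Commute c z) (hyx : y * x = x * y * c) :
    ∀ n : ℕ, y ^ n * x = x * y ^ n * c ^ n := by
  intro n
  induction n with
  | zero => simp
  | succ n ih =>
    calc y ^ (n + 1) * x = y * (y ^ n * x) := by rw [pow_succ']; simp only [mul_assoc]
    _ = y * (x * y ^ n * c ^ n) := by rw [ih]
    _ = (y * x) * (y ^ n * c ^ n) := by simp only [mul_assoc]
    _ = (x * y * c) * (y ^ n * c ^ n) := by rw [hyx]
    _ = x * y * ((c * y ^ n) * c ^ n) := by simp only [mul_assoc]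
    _ = x * y * ((y ^ n * c) * c ^ n) := by rw [(hcomm (y ^ n)).eq]
    _ = x * (y * y ^ n) * (c * c ^ n) := by simp only [mul_assoc]
    _ = x * y ^ (n + 1) * c ^ (n + 1) := by rw [← pow_succ', ← pow_succ']

lemma aux_mul_pow {x y c : G} (hcomm : ∀ z : G, Commute c z) (hyx : y * x = x * y * c) :
    ∀ n : ℕ, (x * y) ^ n = x ^ n * y ^ n * c ^ n.choose 2 := by
  intro n
  induction n with
  | zero => simp
  | succ n ih =>
    have hch : (n + 1).choose 2 = n + n.choose 2 := by
      rw [Nat.choose_succ_succ, Nat.choose_one_right]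
    calc (x * y) ^ (n + 1) = (x ^ n * y ^ n * c ^ n.choose 2) * (x * y) := by
          rw [pow_succ, ih]
    _ = x ^ n * y ^ n * (c ^ n.choose 2 * (x * y)) := by simp only [mul_assoc]
    _ = x ^ n * y ^ n * ((x * y) * c ^ n.choose 2) := by
          rw [((hcomm (x * y)).pow_left (n.choose 2)).eq]
    _ = x ^ n * (y ^ n * x) * (y * c ^ n.choose 2) := by simp only [mul_assoc]
    _ = x ^ n * (x * y ^ n * c ^ n) * (y * c ^ n.choose 2) := by
          rw [aux_pow_mul hcomm hyx]
    _ = (x ^ n * x) * (y ^ n * ((c ^ n * y) * c ^ n.choose 2)) := by simp only [mul_assoc]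
    _ = (x ^ n * x) * (y ^ n * ((y * c ^ n) * c ^ n.choose 2)) := by
          rw [((hcomm y).pow_left n).eq]
    _ = (x ^ n * x) * (y ^ n * y) * (c ^ n * c ^ n.choose 2) := by simp only [mul_assoc]
    _ = x ^ (n + 1) * y ^ (n + 1) * c ^ (n + 1).choose 2 := by
          rw [← pow_succ, ← pow_succ, ← pow_add, hch]

end Aux

/-- For a Camina `p`-group `P` of nilpotence class 2 (`p` odd), the `p`-th power map
induces an isomorphism `P/Ω₁(P) ≃ ℧₁(P)` (expressed here by: `Ω₁(P)` is normal and
the `p`-th power map is a surjective homomorphism onto `℧₁(P)` with kernel `Ω₁(P)`);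
moreover `P' ≤ Ω₁(P)`, `℧₁(P) ≤ P'`, and `℧₁(P)` is elementary abelian. -/
theorem pow_induces_iso_quotient_omega {p : ℕ} (hp : p.Prime) (hodd : Odd p)
    (P : Type*) [Group P] [Finite P] (hPp : IsPGroup p P)
    (hPcam : IsCamina P) (hP2 : IsClassTwo P) :
    (omega1 p P).Normal ∧
    (∃ ν : P →* (agemo p P),
        (∀ x : P, (ν x : P) = x ^ p) ∧
        Function.Surjective ν ∧ ν.ker = omega1 p P) ∧
    commutator P ≤ omega1 p P ∧
    agemo p P ≤ commutator P ∧
    (∀ x y : P, x ∈ agemo p P → y ∈ agemo p P → x * y = y * x) ∧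
    (∀ x ∈ agemo p P, x ^ p = 1) := by
  have hc : ∀ a b x : P, Commute ⁅a, b⁆ x := aux_comm_central hP2.2
  have hcm : ∀ a b : P, ⁅a, b⁆ ∈ commutator P := fun a b =>
    Subgroup.commutator_mem_commutator (Subgroup.mem_top a) (Subgroup.mem_top b)
  -- (B) : every p-th power lies in the commutator subgroup
  have hB : ∀ g : P, g ^ p ∈ commutator P := by
    intro g
    by_contra hg
    have hset := hPcam (g ^ p) hg
    -- the p-th power map on the commutator subgroup is surjective
    have hsurj : ∀ d ∈ commutator P, ∃ c ∈ commutator P, c ^ p = d := by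
      intro d hd
      have hmem : g ^ p * d ∈ {x : P | IsConj (g ^ p) x} := by
        rw [hset]; exact ⟨d, hd, rfl⟩
      obtain ⟨u, hu⟩ := isConj_iff.mp hmem
      refine ⟨⁅u, g⁆, hcm u g, ?_⟩
      have h1 : u * g ^ p * u⁻¹ = (u * g * u⁻¹) ^ p := conj_pow.symm
      have h2 : u * g * u⁻¹ = ⁅u, g⁆ * g := by
        simp only [commutatorElement_def, mul_assoc, inv_mul_cancel, mul_one]
      have h3 : (⁅u, g⁆ * g) ^ p = ⁅u, g⁆ ^ p * g ^ p := (hc u g g).mul_pow p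
      have h4 : ⁅u, g⁆ ^ p * g ^ p = g ^ p * ⁅u, g⁆ ^ p := ((hc u g (g ^ p)).pow_left p).eq
      have : g ^ p * d = g ^ p * ⁅u, g⁆ ^ p := by
        rw [← hu, h1, h2, h3, h4]
      exact (mul_left_cancel this).symm
    -- an element of order p in the commutator subgroup
    obtain ⟨a, b, hab⟩ := hP2.1
    have hc0ne : (⁅a, b⁆ : P) ≠ 1 := fun h =>
      hab (commutatorElement_eq_one_iff_mul_comm.mp h)
    have hexists : ∀ k : ℕ, ∀ c : P, c ∈ commutator P → c ≠ 1 → c ^ p ^ k = 1 →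
        ∃ t : P, t ∈ commutator P ∧ t ≠ 1 ∧ t ^ p = 1 := by
      intro k
      induction k with
      | zero => intro c _ hne h1; simp at h1; exact absurd h1 hne
      | succ k ih =>
        intro c hcmem hne h1
        by_cases hcp : c ^ p = 1
        · exact ⟨c, hcmem, hne, hcp⟩
        · refine ih (c ^ p) (Subgroup.pow_mem _ hcmem p) hcp ?_
          rw [← pow_mul, ← pow_succ']
          exact h1
    obtain ⟨k, hk⟩ := hPp ⁅a, b⁆
    obtain ⟨t, htmem, htne, htp⟩ := hexists k ⁅a, b⁆ (hcm a b) hc0ne hk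
    -- surjective self-map of a finite type is injective
    let f : commutator P → commutator P := fun c => ⟨c.1 ^ p, Subgroup.pow_mem _ c.2 p⟩
    have hfs : Function.Surjective f := by
      rintro ⟨d, hd⟩
      obtain ⟨c, hcmem2, hcp⟩ := hsurj d hd
      exact ⟨⟨c, hcmem2⟩, Subtype.ext hcp⟩
    have hfi : Function.Injective f := Finite.injective_iff_surjective.mpr hfs
    have : (⟨t, htmem⟩ : commutator P) = ⟨1, (commutator P).one_mem⟩ := by
      apply hfi
      apply Subtype.ext
      simp [f, htp]
    exact htne (by simpa using congrArg Subtype.val this)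
  -- (A) : the commutator subgroup has exponent p
  have hA : ∀ c ∈ commutator P, c ^ p = 1 := by
    intro c hcmem
    rw [commutator_eq_closure] at hcmem
    have key : (∀ z : P, Commute c z) ∧ c ^ p = 1 := by
      refine Subgroup.closure_induction (k := commutatorSet P)
        (p := fun x _ => (∀ z : P, Commute x z) ∧ x ^ p = 1) ?_ ?_ ?_ ?_ hcmem
      · rintro x ⟨a, b, rfl⟩
        refine ⟨hc a b, ?_⟩
        -- ⁅a,b⁆ ^ p = 1 since b ^ p is central
        have hyx : b * a = a * b * ⁅b, a⁆ := aux_yx hc a b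
        have h1 : b ^ p * a = a * b ^ p * ⁅b, a⁆ ^ p := aux_pow_mul (hc b a) hyx p
        have h2 : b ^ p * a = a * b ^ p :=
          (Subgroup.mem_center_iff.mp (hP2.2 (hB b)) a).symm
        have h3 : a * b ^ p * ⁅b, a⁆ ^ p = a * b ^ p * 1 := by
          rw [← h1, h2, mul_one]
        have h4 : (⁅b, a⁆ : P) ^ p = 1 := mul_left_cancel h3
        have h5 : (⁅a, b⁆ : P) = ⁅b, a⁆⁻¹ := (commutatorElement_inv b a).symm
        rw [h5, inv_pow, h4, inv_one]
      · exact ⟨fun z => Commute.one_left z, one_pow p⟩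
      · rintro x y _ _ ⟨hxc, hxp⟩ ⟨hyc, hyp⟩
        refine ⟨fun z => (hxc z).mul_left (hyc z), ?_⟩
        rw [(hxc y).mul_pow, hxp, hyp, mul_one]
      · rintro x _ ⟨hxc, hxp⟩
        exact ⟨fun z => (hxc z).inv_left, by rw [inv_pow, hxp, inv_one]⟩
    exact key.2
  -- p divides choose p 2
  obtain ⟨k, hpk⟩ := hodd
  have hch : p.choose 2 = p * k := by
    have h1 : p * (p - 1) = 2 * (p * k) := by
      rw [show p - 1 = 2 * k by omega]; ring
    rw [Nat.choose_two_right]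
    omega
  -- the p-th power map is a homomorphism
  have hpow_mul : ∀ x y : P, (x * y) ^ p = x ^ p * y ^ p := by
    intro x y
    rw [aux_mul_pow (hc y x) (aux_yx hc x y) p, hch, pow_mul, hA ⁅y, x⁆ (hcm y x),
      one_pow, mul_one]
  have hmemage : ∀ x : P, x ^ p ∈ agemo p P := fun x => Subgroup.subset_closure ⟨x, rfl⟩
  let ν₀ : P →* P := { toFun := fun x => x ^ p, map_one' := one_pow p, map_mul' := hpow_mul }
  let ν : P →* agemo p P := ν₀.codRestrict _ hmemage
  have hνcoe : ∀ x : P, (ν x : P) = x ^ p := fun x => rfl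
  -- surjectivity
  have hle_range : agemo p P ≤ ν₀.range := by
    rw [agemo, Subgroup.closure_le]
    rintro x ⟨g, hg⟩
    exact ⟨g, hg⟩
  have hνsurj : Function.Surjective ν := by
    rintro ⟨y, hy⟩
    obtain ⟨x, hx⟩ := hle_range hy
    exact ⟨x, Subtype.ext hx⟩
  -- kernel
  have homega : ∀ x : P, x ∈ omega1 p P ↔ x ^ p = 1 := by
    intro x
    constructor
    · intro hx
      have : omega1 p P ≤ ν₀.ker := by
        rw [omega1, Subgroup.closure_le]
        intro y hy
        exact hy
      exact this hx
    · intro hx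
      exact Subgroup.subset_closure hx
  have hker : ν.ker = omega1 p P := by
    ext x
    rw [MonoidHom.mem_ker, homega]
    constructor
    · intro h
      have := congrArg Subtype.val h
      simpa [hνcoe] using this
    · intro h
      exact Subtype.ext (by simpa [hνcoe] using h)
  have hcomm_le : commutator P ≤ omega1 p P := fun c hcmem =>
    (homega c).mpr (hA c hcmem)
  have hage_le : agemo p P ≤ commutator P := by
    rw [agemo, Subgroup.closure_le]
    rintro x ⟨g, rfl⟩
    exact hB g
  refine ⟨?_, ⟨ν, hνcoe, hνsurj, hker⟩, hcomm_le, hage_le, ?_, ?_⟩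
  · rw [← hker]; exact ν.normal_ker
  · intro x y hx _
    exact (Subgroup.mem_center_iff.mp (hP2.2 (hage_le hx)) y).symm
  · intro x hx
    exact hA x (hage_le hx)
end
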